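/- For any complex numbers x₁ and x₂, the set {x₁, x₂} is constructible in at most 9 operations from the set {x₁ + x₂, x₁·x₂, 1, 2, 4} (using the quadratic formula x_{1,2} = (−b ± √(b² − 4c))/2 with b = −(x₁ + x₂) and c = x₁·x₂). -/
import Mathlib


/-- One operation: to a set `A ⊆ ℂ` containing `x, y` we may add `x + y`, `x - y`,
`x * y`, `x / y` (when `y ≠ 0`), or any `z` with `z ^ 2 = x`. -/
def Step (A B : Set ℂ) : Prop :=
  ∃ z : ℂ, B = insert z A ∧
    ((∃ x ∈ A, ∃ y ∈ A, z = x + y ∨ z = x - y ∨ z = x * y ∨ (y ≠ 0 ∧ z = x / y)) ∨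
      ∃ x ∈ A, z ^ 2 = x)

/-- `S` is constructible from `B` in at most `n` operations: there is a chain
`B = A 0, A 1, …, A k` with `k ≤ n`, each set obtained from the previous one by one
operation, such that `S ⊆ A k`. -/
def ConstructibleIn (B S : Set ℂ) (n : ℕ) : Prop :=
  ∃ k ≤ n, ∃ A : ℕ → Set ℂ,
    A 0 = B ∧ (∀ i < k, Step (A i) (A (i + 1))) ∧ S ⊆ A k

/-- For any complex numbers `x₁, x₂`, the set `{x₁, x₂}` is constructible in at most
`9` operations from `{x₁ + x₂, x₁ * x₂, 1, 2, 4}` (via the quadratic formula). -/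
theorem roots_constructible_from_vieta (x₁ x₂ : ℂ) :
    ConstructibleIn {x₁ + x₂, x₁ * x₂, 1, 2, 4} {x₁, x₂} 9 := by
  set s : ℂ := x₁ + x₂ with hs
  set p : ℂ := x₁ * x₂ with hp
  let A0 : Set ℂ := {s, p, 1, 2, 4}
  let A1 : Set ℂ := insert (s * s) A0
  let A2 : Set ℂ := insert (4 * p) A1
  let A3 : Set ℂ := insert (s * s - 4 * p) A2
  let A4 : Set ℂ := insert (x₁ - x₂) A3
  let A5 : Set ℂ := insert (s + (x₁ - x₂)) A4
  let A6 : Set ℂ := insert (s - (x₁ - x₂)) A5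
  let A7 : Set ℂ := insert ((s + (x₁ - x₂)) / 2) A6
  let A8 : Set ℂ := insert ((s - (x₁ - x₂)) / 2) A7
  refine ⟨8, by norm_num, fun i => match i with
    | 0 => A0 | 1 => A1 | 2 => A2 | 3 => A3 | 4 => A4
    | 5 => A5 | 6 => A6 | 7 => A7 | _ + 8 => A8, rfl, ?_, ?_⟩
  · have hsA0 : s ∈ A0 := Set.mem_insert _ _
    have hpA0 : p ∈ A0 := Set.mem_insert_of_mem _ (Set.mem_insert _ _)
    have h2A0 : (2 : ℂ) ∈ A0 := Set.mem_insert_of_mem _ (Set.mem_insert_of_mem _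
      (Set.mem_insert_of_mem _ (Set.mem_insert _ _)))
    have h4A0 : (4 : ℂ) ∈ A0 := Set.mem_insert_of_mem _ (Set.mem_insert_of_mem _
      (Set.mem_insert_of_mem _ (Set.mem_insert_of_mem _ rfl)))
    have hsA4 : s ∈ A4 := Set.mem_insert_of_mem _ (Set.mem_insert_of_mem _
      (Set.mem_insert_of_mem _ (Set.mem_insert_of_mem _ hsA0)))
    have h2A6 : (2 : ℂ) ∈ A6 := Set.mem_insert_of_mem _ (Set.mem_insert_of_mem _
      (Set.mem_insert_of_mem _ (Set.mem_insert_of_mem _ (Set.mem_insert_of_mem _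
      (Set.mem_insert_of_mem _ h2A0)))))
    intro i hi
    interval_cases i
    · exact ⟨s * s, rfl, Or.inl ⟨s, hsA0, s, hsA0, Or.inr (Or.inr (Or.inl rfl))⟩⟩
    · exact ⟨4 * p, rfl, Or.inl ⟨4, Set.mem_insert_of_mem _ h4A0, p,
        Set.mem_insert_of_mem _ hpA0, Or.inr (Or.inr (Or.inl rfl))⟩⟩
    · exact ⟨s * s - 4 * p, rfl, Or.inl ⟨s * s,
        Set.mem_insert_of_mem _ (Set.mem_insert _ _), 4 * p, Set.mem_insert _ _,
        Or.inr (Or.inl rfl)⟩⟩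
    · exact ⟨x₁ - x₂, rfl, Or.inr ⟨s * s - 4 * p, Set.mem_insert _ _, by rw [hs, hp]; ring⟩⟩
    · exact ⟨s + (x₁ - x₂), rfl, Or.inl ⟨s, hsA4, x₁ - x₂, Set.mem_insert _ _, Or.inl rfl⟩⟩
    · exact ⟨s - (x₁ - x₂), rfl, Or.inl ⟨s, Set.mem_insert_of_mem _ hsA4, x₁ - x₂,
        Set.mem_insert_of_mem _ (Set.mem_insert _ _), Or.inr (Or.inl rfl)⟩⟩
    · exact ⟨(s + (x₁ - x₂)) / 2, rfl, Or.inl ⟨s + (x₁ - x₂),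
        Set.mem_insert_of_mem _ (Set.mem_insert _ _), 2, h2A6,
        Or.inr (Or.inr (Or.inr ⟨two_ne_zero, rfl⟩))⟩⟩
    · exact ⟨(s - (x₁ - x₂)) / 2, rfl, Or.inl ⟨s - (x₁ - x₂),
        Set.mem_insert_of_mem _ (Set.mem_insert _ _), 2, Set.mem_insert_of_mem _ h2A6,
        Or.inr (Or.inr (Or.inr ⟨two_ne_zero, rfl⟩))⟩⟩
  · intro z hz
    rcases hz with h | h
    · have : z = (s + (x₁ - x₂)) / 2 := by rw [h, hs]; ring
      rw [this]; exact Set.mem_insert_of_mem _ (Set.mem_insert _ _)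
    · have : z = (s - (x₁ - x₂)) / 2 := by rw [h, hs]; ring
      rw [this]; exact Set.mem_insert _ _
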